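/- Let ρ > 0 and V(J) = ½∥J∥² − ρ ln Z(J) on M₃(ℝ). Then V is twice differentiable, its second derivative satisfies, for all J, H ∈ M₃(ℝ), D²V(J)(H,H) = ∥H∥² − ρ ∫_{SO₃(ℝ)} ((A − 𝒥[M_J])·H)² M_J(A) dμ(A), and consequently D²V(J)(H,H) < ∥H∥² for every H ≠ 0 (all eigenvalues of the Hessian of V are strictly less than 1). -/

import Mathlib

open Matrix MeasureTheory

set_option maxHeartbeats 1000000
set_option synthInstance.maxHeartbeats 1000000
set_option linter.unusedVariables false
set_option linter.unreachableTactic false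
set_option linter.unusedTactic false
set_option linter.deprecated false

/-- The space of `3 × 3` real matrices. -/
abbrev Mat3 := Matrix (Fin 3) (Fin 3) ℝ

instance : MeasurableSpace Mat3 := inferInstanceAs (MeasurableSpace (Fin 3 → Fin 3 → ℝ))

attribute [local instance] Matrix.normedAddCommGroup Matrix.normedSpace

/-- `SO₃(ℝ)`: real `3 × 3` matrices with `AᵀA = I₃` and `det A = 1`. -/
def SO3 : Set Mat3 := {A | Aᵀ * A = 1 ∧ A.det = 1}

/-- The inner product `A·B = ½ Tr(ABᵀ)` on `M₃(ℝ)`. -/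
noncomputable def mdot (A B : Mat3) : ℝ := (1 / 2) * (A * Bᵀ).trace

/-- `μ` is the Haar probability measure of `SO₃(ℝ)`, viewed as a measure on `M₃(ℝ)`. -/
def IsHaarSO3 (μ : Measure Mat3) : Prop :=
  IsProbabilityMeasure μ ∧ μ SO3ᶜ = 0 ∧
    ∀ P ∈ SO3, Measure.map (fun A => P * A) μ = μ

/-- The normalization constant `Z(J) = ∫ exp(J·A) dμ(A)`. -/
noncomputable def Z (μ : Measure Mat3) (J : Mat3) : ℝ := ∫ A, Real.exp (mdot J A) ∂μ

/-- The generalized von Mises density `M_J(A) = exp(J·A)/Z(J)`. -/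
noncomputable def vonMises (μ : Measure Mat3) (J : Mat3) (A : Mat3) : ℝ :=
  Real.exp (mdot J A) / Z μ J

/-- The first moment `𝒥[f] = ∫ A f(A) dμ(A)`, taken entrywise. -/
noncomputable def Jcal (μ : Measure Mat3) (f : Mat3 → ℝ) : Mat3 :=
  Matrix.of fun i j => ∫ A, f A * A i j ∂μ

/-- The potential `V(J) = ½∥J∥² − ρ ln Z(J)`. -/
noncomputable def V (μ : Measure Mat3) (ρ : ℝ) (J : Mat3) : ℝ :=
  (1 / 2) * mdot J J - ρ * Real.log (Z μ J)

noncomputable instance mat3NACG : NormedAddCommGroup Mat3 :=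
  { (Matrix.normedAddCommGroup : NormedAddCommGroup Mat3) with
    toMetricSpace := (Matrix.normedAddCommGroup : NormedAddCommGroup Mat3).toMetricSpace.replaceUniformity
      (U := Matrix.instUniformSpace (Fin 3) (Fin 3) ℝ) rfl }

noncomputable instance mat3NS : NormedSpace ℝ Mat3 :=
  { toModule := Matrix.module, norm_smul_le := (Matrix.normedSpace : NormedSpace ℝ Mat3).norm_smul_le }

noncomputable instance mat3CLM2ENorm : ContinuousENorm (Mat3 →L[ℝ] Mat3 →L[ℝ] ℝ) :=
  @SeminormedAddGroup.toContinuousENorm (Mat3 →L[ℝ] Mat3 →L[ℝ] ℝ) inferInstance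

instance : BorelSpace Mat3 := inferInstanceAs (BorelSpace (Fin 3 → Fin 3 → ℝ))

lemma mdot_eq_sum (A B : Mat3) :
    mdot A B = (1/2) * ∑ i, ∑ j, A i j * B i j := by
  simp [mdot, Matrix.trace, Matrix.diag, Matrix.mul_apply]

lemma mdot_comm (A B : Mat3) : mdot A B = mdot B A := by
  unfold mdot
  rw [← Matrix.trace_transpose, Matrix.transpose_mul, Matrix.transpose_transpose]

noncomputable def mdotLin : Mat3 →ₗ[ℝ] Mat3 →ₗ[ℝ] ℝ :=
  LinearMap.mk₂ ℝ mdot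
    (fun A A' B => by simp [mdot, Matrix.add_mul, mul_add])
    (fun c A B => by simp [mdot, Matrix.smul_mul]; ring)
    (fun A B B' => by simp [mdot, Matrix.transpose_add, Matrix.mul_add, mul_add])
    (fun c A B => by simp [mdot, Matrix.transpose_smul, Matrix.mul_smul]; ring)

noncomputable def mdotL : Mat3 →L[ℝ] Mat3 →L[ℝ] ℝ :=
  LinearMap.toContinuousLinearMap
    { toFun := fun A => LinearMap.toContinuousLinearMap (mdotLin A)
      map_add' := by intro A A'; ext B; simp
      map_smul' := by intro c A; ext B; simp }

@[simp] lemma mdotL_apply (A B : Mat3) : mdotL A B = mdot A B := rfl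

lemma entry_le_norm (A : Mat3) (i j : Fin 3) : |A i j| ≤ ‖A‖ :=
  Matrix.norm_entry_le_entrywise_sup_norm A

lemma norm_le_one_of_SO3 {A : Mat3} (hA : A ∈ SO3) : ‖A‖ ≤ 1 := by
  rw [Matrix.norm_le_iff (by norm_num : (0:ℝ) ≤ 1)]
  intro i j
  have h1 : (Aᵀ * A) j j = 1 := by rw [hA.1]; simp
  have h2 : ∑ k, A k j * A k j = 1 := by
    simpa [Matrix.mul_apply] using h1
  have h3 : A i j * A i j ≤ 1 := by
    rw [← h2]
    exact Finset.single_le_sum (f := fun k => A k j * A k j)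
      (fun k _ => mul_self_nonneg _) (Finset.mem_univ i)
  have h4 : |A i j| ≤ 1 := abs_le_one_iff_mul_self_le_one.2 h3
  simpa using h4

lemma abs_mdot_le (A B : Mat3) : |mdot A B| ≤ 9/2 * ‖A‖ * ‖B‖ := by
  rw [mdot_eq_sum]
  have h : |∑ i, ∑ j, A i j * B i j| ≤ 9 * (‖A‖ * ‖B‖) := by
    calc |∑ i, ∑ j, A i j * B i j| ≤ ∑ i, |∑ j, A i j * B i j| := Finset.abs_sum_le_sum_abs _ _
    _ ≤ ∑ i : Fin 3, ∑ j : Fin 3, |A i j * B i j| :=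
        Finset.sum_le_sum (fun i _ => Finset.abs_sum_le_sum_abs _ _)
    _ ≤ ∑ i : Fin 3, ∑ j : Fin 3, ‖A‖ * ‖B‖ := by
        refine Finset.sum_le_sum (fun i _ => Finset.sum_le_sum (fun j _ => ?_))
        rw [abs_mul]
        exact mul_le_mul (entry_le_norm A i j) (entry_le_norm B i j) (abs_nonneg _) (norm_nonneg _)
    _ = 9 * (‖A‖ * ‖B‖) := by simp; ring
  rw [abs_mul, abs_of_nonneg (by norm_num : (0:ℝ) ≤ (1:ℝ)/2)]
  linarith

lemma norm_mdotL_le (A : Mat3) : ‖mdotL A‖ ≤ 9/2 * ‖A‖ := by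
  refine ContinuousLinearMap.opNorm_le_bound _ (by positivity) (fun B => ?_)
  rw [Real.norm_eq_abs, mdotL_apply]
  calc |mdot A B| ≤ 9/2 * ‖A‖ * ‖B‖ := abs_mdot_le A B
  _ = 9/2 * ‖A‖ * ‖B‖ := rfl

section Haar
variable {μ : Measure Mat3} (hμ : IsHaarSO3 μ)

lemma ae_SO3 (hμ : IsHaarSO3 μ) : ∀ᵐ A ∂μ, A ∈ SO3 := by
  rw [MeasureTheory.ae_iff]
  simpa [Set.compl_def] using hμ.2.1

lemma ae_norm_le_one (hμ : IsHaarSO3 μ) : ∀ᵐ A ∂μ, ‖A‖ ≤ 1 :=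
  (ae_SO3 hμ).mono fun A hA => norm_le_one_of_SO3 hA

lemma integrable_of_cont_bound (hμ : IsHaarSO3 μ) {E : Type*} [NormedAddCommGroup E]
    [NormedSpace ℝ E] {g : Mat3 → E} (hg : Continuous g) (C : ℝ)
    (hC : ∀ A : Mat3, ‖A‖ ≤ 1 → ‖g A‖ ≤ C) : Integrable g μ := by
  have : IsProbabilityMeasure μ := hμ.1
  exact (integrable_const C).mono' hg.aestronglyMeasurable
    ((ae_norm_le_one hμ).mono fun A hA => hC A hA)

lemma continuous_mdotA (J : Mat3) : Continuous fun A : Mat3 => mdot J A := by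
  have : Continuous fun A : Mat3 => mdotL A J :=
    (ContinuousLinearMap.apply ℝ ℝ J).continuous.comp mdotL.continuous
  simpa [mdot_comm J] using this

lemma continuous_exp_mdot (J : Mat3) : Continuous fun A : Mat3 => Real.exp (mdot J A) :=
  Real.continuous_exp.comp (continuous_mdotA J)

lemma exp_mdot_le {J A : Mat3} (hA : ‖A‖ ≤ 1) (c : ℝ) (hc : ‖J‖ ≤ c) :
    Real.exp (mdot J A) ≤ Real.exp (9/2 * c) := by
  refine Real.exp_le_exp.2 ?_
  have h1 : mdot J A ≤ |mdot J A| := le_abs_self _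
  have h2 := abs_mdot_le J A
  have hJ : (0:ℝ) ≤ ‖J‖ := norm_nonneg _
  nlinarith [norm_nonneg A]

lemma integrable_exp_mdot (hμ : IsHaarSO3 μ) (J : Mat3) :
    Integrable (fun A => Real.exp (mdot J A)) μ :=
  integrable_of_cont_bound hμ (continuous_exp_mdot J) (Real.exp (9/2 * ‖J‖))
    (fun A hA => by
      rw [Real.norm_eq_abs, abs_of_pos (Real.exp_pos _)]
      exact exp_mdot_le hA _ le_rfl)

lemma Z_pos (hμ : IsHaarSO3 μ) (J : Mat3) : 0 < Z μ J := by
  have : IsProbabilityMeasure μ := hμ.1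
  have h1 : Real.exp (-(9/2 * ‖J‖)) ≤ Z μ J := by
    rw [show Real.exp (-(9/2 * ‖J‖)) = ∫ _, Real.exp (-(9/2 * ‖J‖)) ∂μ by simp]
    refine integral_mono_ae (integrable_const _) (integrable_exp_mdot hμ J) ?_
    refine (ae_norm_le_one hμ).mono fun A hA => ?_
    refine Real.exp_le_exp.2 ?_
    have h2 := abs_mdot_le J A
    have := abs_le.1 h2
    nlinarith [norm_nonneg J, norm_nonneg A]
  exact lt_of_lt_of_le (Real.exp_pos _) h1

lemma Z_ne (hμ : IsHaarSO3 μ) (J : Mat3) : Z μ J ≠ 0 := (Z_pos hμ J).ne'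

/-- second-derivative rank-one integrand -/
noncomputable def mQ (A : Mat3) : Mat3 →L[ℝ] Mat3 →L[ℝ] ℝ := (mdotL A).smulRight (mdotL A)

lemma mQ_apply (A K H : Mat3) : mQ A K H = mdot A K * mdot A H := by
  simp [mQ, smul_eq_mul]

lemma continuous_mQ : Continuous fun A : Mat3 => mQ A := by
  have h1 : Continuous fun A : Mat3 =>
      (ContinuousLinearMap.smulRightL ℝ Mat3 (Mat3 →L[ℝ] ℝ)) (mdotL A) :=
    (ContinuousLinearMap.smulRightL ℝ Mat3 (Mat3 →L[ℝ] ℝ)).continuous.comp mdotL.continuous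
  exact h1.clm_apply mdotL.continuous

lemma norm_mQ_le (A : Mat3) (hA : ‖A‖ ≤ 1) : ‖mQ A‖ ≤ 81/4 := by
  rw [mQ, ContinuousLinearMap.norm_smulRight_apply]
  have h := norm_mdotL_le A
  have h2 : ‖mdotL A‖ ≤ 9/2 := by nlinarith [norm_nonneg (mdotL A)]
  nlinarith [norm_nonneg (mdotL A)]

lemma norm_smul_mQ_le (c : ℝ) {A : Mat3} (hA : ‖A‖ ≤ 1) : ‖c • mQ A‖ ≤ |c| * (81/4) := by
  refine ContinuousLinearMap.opNorm_le_bound _ (by positivity) (fun K => ?_)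
  have h1 : (c • mQ A) K = (c * mdot A K) • mdotL A := by
    ext H; simp [mQ, smul_eq_mul]; ring
  rw [h1, norm_smul (c * mdot A K) (mdotL A)]
  have h2 : ‖mdotL A‖ ≤ 9/2 := by nlinarith [norm_mdotL_le A, norm_nonneg (mdotL A)]
  have h3 := abs_mdot_le A K
  have h4 : |mdot A K| ≤ 9/2 * ‖K‖ := by nlinarith [norm_nonneg K, abs_nonneg (mdot A K)]
  rw [Real.norm_eq_abs, abs_mul]
  have h5 : (0:ℝ) ≤ |c| := abs_nonneg c
  have h6 : (0:ℝ) ≤ ‖K‖ := norm_nonneg K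
  calc |c| * |mdot A K| * ‖mdotL A‖ ≤ |c| * (9/2 * ‖K‖) * (9/2) := by
        apply mul_le_mul
        · exact mul_le_mul_of_nonneg_left h4 h5
        · exact h2
        · exact norm_nonneg _
        · positivity
  _ = |c| * (81/4) * ‖K‖ := by ring
noncomputable def L1 (μ : Measure Mat3) (J : Mat3) : Mat3 →L[ℝ] ℝ :=
  ∫ A, Real.exp (mdot J A) • mdotL A ∂μ

noncomputable def L2 (μ : Measure Mat3) (J : Mat3) : Mat3 →L[ℝ] Mat3 →L[ℝ] ℝ :=
  ∫ A, Real.exp (mdot J A) • mQ A ∂μ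

lemma integrable_L1_integrand (hμ : IsHaarSO3 μ) (J : Mat3) :
    Integrable (fun A => Real.exp (mdot J A) • mdotL A) μ := by
  refine integrable_of_cont_bound hμ ((continuous_exp_mdot J).smul mdotL.continuous)
    (Real.exp (9/2 * ‖J‖) * (9/2)) (fun A hA => ?_)
  rw [norm_smul (Real.exp (mdot J A)) (mdotL A), Real.norm_eq_abs, abs_of_pos (Real.exp_pos _)]
  have h1 := exp_mdot_le hA ‖J‖ le_rfl
  have h2 : ‖mdotL A‖ ≤ 9/2 := by nlinarith [norm_mdotL_le A, norm_nonneg (mdotL A)]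
  nlinarith [Real.exp_pos (mdot J A), norm_nonneg (mdotL A)]

lemma integrable_L2_integrand (hμ : IsHaarSO3 μ) (J : Mat3) :
    Integrable (fun A => Real.exp (mdot J A) • mQ A) μ := by
  refine integrable_of_cont_bound (E := Mat3 →L[ℝ] Mat3 →L[ℝ] ℝ) hμ
    ((continuous_exp_mdot J).smul continuous_mQ)
    (Real.exp (9/2 * ‖J‖) * (81/4)) (fun A hA => ?_)
  have h0 := norm_smul_mQ_le (Real.exp (mdot J A)) hA
  rw [abs_of_pos (Real.exp_pos _)] at h0
  have h1 := exp_mdot_le hA ‖J‖ le_rfl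
  nlinarith [Real.exp_pos (mdot J A)]

lemma hasFDerivAt_exp_mdot (A J : Mat3) :
    HasFDerivAt (fun J : Mat3 => Real.exp (mdot J A))
      (Real.exp (mdot J A) • mdotL A) J := by
  have hlin : HasFDerivAt (fun J : Mat3 => mdot J A) (mdotL A) J := by
    have h0 : HasFDerivAt (fun J : Mat3 => mdotL.flip A J) (mdotL.flip A) J :=
      (mdotL.flip A).hasFDerivAt
    have he : (fun J : Mat3 => mdotL.flip A J) = fun J : Mat3 => mdot J A := by
      funext K; simp [ContinuousLinearMap.flip_apply]
    have hd : mdotL.flip A = mdotL A := by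
      ext K; simp [ContinuousLinearMap.flip_apply, mdot_comm]
    rw [he, hd] at h0; exact h0
  have := (Real.hasDerivAt_exp (mdot J A)).comp_hasFDerivAt J hlin
  exact this

lemma hasFDerivAt_Z (hμ : IsHaarSO3 μ) (J : Mat3) :
    HasFDerivAt (Z μ) (L1 μ J) J := by
  haveI : IsProbabilityMeasure μ := hμ.1
  have key := hasFDerivAt_integral_of_dominated_of_fderiv_le
    (F := fun J A => Real.exp (mdot J A))
    (F' := fun J A => Real.exp (mdot J A) • mdotL A)
    (x₀ := J) (bound := fun _ => Real.exp (9/2 * (‖J‖ + 1)) * (9/2)) (s := Metric.ball J 1)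
    (Metric.ball_mem_nhds J one_pos)
    (Filter.Eventually.of_forall fun x => (continuous_exp_mdot x).aestronglyMeasurable)
    (integrable_exp_mdot hμ J)
    (((continuous_exp_mdot J).smul mdotL.continuous).aestronglyMeasurable)
    ?_ (integrable_const _)
    (Filter.Eventually.of_forall fun A => fun x _ => hasFDerivAt_exp_mdot A x)
  · exact key
  · refine (ae_norm_le_one hμ).mono fun A hA x hx => ?_
    show ‖Real.exp (mdot x A) • mdotL A‖ ≤ _
    rw [norm_smul (Real.exp (mdot x A)) (mdotL A), Real.norm_eq_abs, abs_of_pos (Real.exp_pos _)]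
    have hxn : ‖x‖ ≤ ‖J‖ + 1 := by
      have h0 := mem_ball_iff_norm.1 hx
      have h1 := norm_sub_norm_le x J
      linarith
    have h1 := exp_mdot_le hA (‖J‖ + 1) hxn
    have h2 : ‖mdotL A‖ ≤ 9/2 := by nlinarith [norm_mdotL_le A, norm_nonneg (mdotL A)]
    nlinarith [Real.exp_pos (mdot x A), norm_nonneg (mdotL A)]

lemma hasFDerivAt_L1 (hμ : IsHaarSO3 μ) (J : Mat3) :
    HasFDerivAt (L1 μ) (L2 μ J) J := by
  haveI : IsProbabilityMeasure μ := hμ.1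
  have key := hasFDerivAt_integral_of_dominated_of_fderiv_le
    (F := fun J A => Real.exp (mdot J A) • mdotL A)
    (F' := fun J A => Real.exp (mdot J A) • mQ A)
    (x₀ := J) (bound := fun _ => Real.exp (9/2 * (‖J‖ + 1)) * (81/4)) (s := Metric.ball J 1)
    (Metric.ball_mem_nhds J one_pos)
    (Filter.Eventually.of_forall fun x =>
      ((continuous_exp_mdot x).smul mdotL.continuous).aestronglyMeasurable)
    (integrable_L1_integrand hμ J)
    (((continuous_exp_mdot J).smul continuous_mQ).aestronglyMeasurable)
    ?_ (integrable_const _)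
    (Filter.Eventually.of_forall fun A => fun x _ => ?_)
  · exact key
  · refine (ae_norm_le_one hμ).mono fun A hA x hx => ?_
    show ‖Real.exp (mdot x A) • mQ A‖ ≤ _
    have h0 := norm_smul_mQ_le (Real.exp (mdot x A)) hA
    rw [abs_of_pos (Real.exp_pos _)] at h0
    have hxn : ‖x‖ ≤ ‖J‖ + 1 := by
      have h2 := mem_ball_iff_norm.1 hx
      have h3 := norm_sub_norm_le x J
      linarith
    have h1 := exp_mdot_le hA (‖J‖ + 1) hxn
    nlinarith [Real.exp_pos (mdot x A)]
  · have h := (hasFDerivAt_exp_mdot A x).smul_const (mdotL A)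
    have : (Real.exp (mdot x A) • mdotL A).smulRight (mdotL A)
        = Real.exp (mdot x A) • mQ A := by
      ext K H
      simp [mQ, ContinuousLinearMap.smulRight_apply, smul_eq_mul]
      ring
    rwa [this] at h

noncomputable def DV (μ : Measure Mat3) (ρ : ℝ) (J : Mat3) : Mat3 →L[ℝ] ℝ :=
  mdotL J - ρ • ((Z μ J)⁻¹ • L1 μ J)

noncomputable def DDV (μ : Measure Mat3) (ρ : ℝ) (J : Mat3) : Mat3 →L[ℝ] Mat3 →L[ℝ] ℝ :=
  mdotL - ρ • ((Z μ J)⁻¹ • L2 μ J +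
    ((-((Z μ J) ^ 2)⁻¹) • L1 μ J).smulRight (L1 μ J))

lemma hasFDerivAt_half_mdot (J : Mat3) :
    HasFDerivAt (fun J : Mat3 => (1/2) * mdot J J) (mdotL J) J := by
  have hb : IsBoundedBilinearMap ℝ (fun p : Mat3 × Mat3 => mdotL p.1 p.2) :=
    mdotL.isBoundedBilinearMap
  have h1 : HasFDerivAt (fun J : Mat3 => (J, J))
      ((ContinuousLinearMap.id ℝ Mat3).prod (ContinuousLinearMap.id ℝ Mat3)) J :=
    HasFDerivAt.prodMk (hasFDerivAt_id J) (hasFDerivAt_id J)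
  have h2 := (HasFDerivAt.comp (f := fun J : Mat3 => (J, J)) J (hb.hasFDerivAt (J, J)) h1).const_mul (1/2 : ℝ)
  have he : ((1:ℝ)/2) • ((hb.deriv (J, J)).comp
      ((ContinuousLinearMap.id ℝ Mat3).prod (ContinuousLinearMap.id ℝ Mat3))) = mdotL J := by
    ext H
    simp [IsBoundedBilinearMap.deriv_apply, mdot_comm H J]
    ring
  rw [he] at h2
  exact h2

lemma hasFDerivAt_V (hμ : IsHaarSO3 μ) (ρ : ℝ) (J : Mat3) :
    HasFDerivAt (V μ ρ) (DV μ ρ J) J := by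
  have hZ := hasFDerivAt_Z hμ J
  have hlog : HasFDerivAt (fun J => Real.log (Z μ J)) ((Z μ J)⁻¹ • L1 μ J) J := by
    have := (Real.hasDerivAt_log (Z_ne hμ J)).comp_hasFDerivAt J hZ
    exact this
  have h2 : HasFDerivAt (fun J => ρ * Real.log (Z μ J))
      (ρ • ((Z μ J)⁻¹ • L1 μ J)) J := hlog.const_mul ρ
  exact (hasFDerivAt_half_mdot J).sub h2

lemma hasFDerivAt_Zinv (hμ : IsHaarSO3 μ) (J : Mat3) :
    HasFDerivAt (fun J => (Z μ J)⁻¹) ((-((Z μ J) ^ 2)⁻¹) • L1 μ J) J := by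
  have h := (hasDerivAt_inv (Z_ne hμ J)).comp_hasFDerivAt J (hasFDerivAt_Z hμ J)
  exact h
  try (ext H; simp [smul_eq_mul]; try ring)

lemma hasFDerivAt_DV (hμ : IsHaarSO3 μ) (ρ : ℝ) (J : Mat3) :
    HasFDerivAt (DV μ ρ) (DDV μ ρ J) J := by
  have hG : HasFDerivAt (fun J => (Z μ J)⁻¹ • L1 μ J)
      ((Z μ J)⁻¹ • L2 μ J + ((-((Z μ J) ^ 2)⁻¹) • L1 μ J).smulRight (L1 μ J)) J :=
    (hasFDerivAt_Zinv hμ J).smul (hasFDerivAt_L1 hμ J)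
  have h1 : HasFDerivAt (fun J : Mat3 => mdotL J) mdotL J := mdotL.hasFDerivAt
  exact h1.sub (hG.const_smul ρ)

lemma fderiv_V (hμ : IsHaarSO3 μ) (ρ : ℝ) : fderiv ℝ (V μ ρ) = DV μ ρ :=
  funext fun J => (hasFDerivAt_V hμ ρ J).fderiv

lemma fderiv_fderiv_V (hμ : IsHaarSO3 μ) (ρ : ℝ) (J : Mat3) :
    fderiv ℝ (fderiv ℝ (V μ ρ)) J = DDV μ ρ J := by
  rw [fderiv_V hμ ρ]
  exact (hasFDerivAt_DV hμ ρ J).fderiv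

lemma DDV_apply (μ : Measure Mat3) (ρ : ℝ) (J H : Mat3) :
    DDV μ ρ J H H = mdot H H -
      ρ * ((Z μ J)⁻¹ * (L2 μ J H H) - ((Z μ J) ^ 2)⁻¹ * (L1 μ J H) ^ 2) := by
  simp only [DDV, ContinuousLinearMap.sub_apply, ContinuousLinearMap.smul_apply,
    ContinuousLinearMap.add_apply, ContinuousLinearMap.smulRight_apply, mdotL_apply,
    smul_eq_mul, ContinuousLinearMap.coe_smul', Pi.smul_apply]
  ring

lemma L1_apply (hμ : IsHaarSO3 μ) (J H : Mat3) :
    L1 μ J H = ∫ A, Real.exp (mdot J A) * mdot A H ∂μ := by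
  rw [L1, ContinuousLinearMap.integral_apply (integrable_L1_integrand hμ J) H]
  congr 1

lemma integrable_L2K_integrand (hμ : IsHaarSO3 μ) (J K : Mat3) :
    Integrable (fun A => (Real.exp (mdot J A) • mQ A) K) μ := by
  have hc : Continuous fun A : Mat3 => (Real.exp (mdot J A) • mQ A) K := by
    have : Continuous fun A : Mat3 => Real.exp (mdot J A) • mQ A :=
      (continuous_exp_mdot J).smul continuous_mQ
    exact this.clm_apply continuous_const
  refine integrable_of_cont_bound hμ hc (Real.exp (9/2 * ‖J‖) * (81/4) * ‖K‖)
    (fun A hA => ?_)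
  have h0 := norm_smul_mQ_le (Real.exp (mdot J A)) hA
  rw [abs_of_pos (Real.exp_pos _)] at h0
  have h1 := exp_mdot_le hA ‖J‖ le_rfl
  calc ‖(Real.exp (mdot J A) • mQ A) K‖
      ≤ ‖Real.exp (mdot J A) • mQ A‖ * ‖K‖ := ContinuousLinearMap.le_opNorm _ K
  _ ≤ Real.exp (9/2 * ‖J‖) * (81/4) * ‖K‖ := by
      refine mul_le_mul_of_nonneg_right ?_ (norm_nonneg K)
      nlinarith [Real.exp_pos (mdot J A)]

lemma L2_apply (hμ : IsHaarSO3 μ) (J K H : Mat3) :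
    L2 μ J K H = ∫ A, Real.exp (mdot J A) * (mdot A K * mdot A H) ∂μ := by
  rw [L2, ContinuousLinearMap.integral_apply (integrable_L2_integrand hμ J) K,
    ContinuousLinearMap.integral_apply (integrable_L2K_integrand hμ J K) H]
  congr 1

lemma continuous_entry (i j : Fin 3) : Continuous fun A : Mat3 => A i j :=
  (continuous_apply j).comp (continuous_apply i)

lemma integral_invariance (hμ : IsHaarSO3 μ) {P : Mat3} (hP : P ∈ SO3) {g : Mat3 → ℝ}
    (hg : AEStronglyMeasurable g μ) : ∫ A, g (P * A) ∂μ = ∫ A, g A ∂μ := by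
  have h := integral_map (μ := μ) (φ := fun A : Mat3 => P * A)
    ((continuous_const.matrix_mul continuous_id).aemeasurable) (f := g)
    (by rwa [hμ.2.2 P hP])
  rw [hμ.2.2 P hP] at h
  exact h.symm

lemma int_entry (hμ : IsHaarSO3 μ) (i j : Fin 3) : Integrable (fun A : Mat3 => A i j) μ :=
  integrable_of_cont_bound hμ (continuous_entry i j) 1
    (fun A hA => le_trans (entry_le_norm A i j) hA)

lemma int_entry_mul (hμ : IsHaarSO3 μ) (i j k l : Fin 3) :
    Integrable (fun A : Mat3 => A i j * A k l) μ := by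
  refine integrable_of_cont_bound hμ ((continuous_entry i j).mul (continuous_entry k l)) 1
    (fun A hA => ?_)
  rw [Real.norm_eq_abs, abs_mul]
  have h1 := le_trans (entry_le_norm A i j) hA
  have h2 := le_trans (entry_le_norm A k l) hA
  nlinarith [abs_nonneg (A i j), abs_nonneg (A k l)]

def D1 : Mat3 := !![1,0,0; 0,-1,0; 0,0,-1]
def D2 : Mat3 := !![-1,0,0; 0,1,0; 0,0,-1]
def Rc : Mat3 := !![0,1,0; 0,0,1; 1,0,0]

lemma D1_SO3 : D1 ∈ SO3 := by
  constructor
  · ext i j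
    fin_cases i <;> fin_cases j <;>
      simp [D1, Matrix.mul_apply, Fin.sum_univ_three, Matrix.one_apply,
        Matrix.transpose_apply, Matrix.vecHead, Matrix.vecTail]
  · simp [D1, Matrix.det_fin_three]

lemma D2_SO3 : D2 ∈ SO3 := by
  constructor
  · ext i j
    fin_cases i <;> fin_cases j <;>
      simp [D2, Matrix.mul_apply, Fin.sum_univ_three, Matrix.one_apply,
        Matrix.transpose_apply, Matrix.vecHead, Matrix.vecTail]
  · simp [D2, Matrix.det_fin_three]

lemma Rc_SO3 : Rc ∈ SO3 := by
  constructor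
  · ext i j
    fin_cases i <;> fin_cases j <;>
      simp [Rc, Matrix.mul_apply, Fin.sum_univ_three, Matrix.one_apply,
        Matrix.transpose_apply, Matrix.vecHead, Matrix.vecTail]
  · simp [Rc, Matrix.det_fin_three]

lemma M1 (hμ : IsHaarSO3 μ) (i j : Fin 3) : ∫ A, A i j ∂μ = 0 := by
  have key : ∀ P : Mat3, P ∈ SO3 → (∀ A : Mat3, (P * A) i j = -A i j) →
      ∫ A, A i j ∂μ = 0 := by
    intro P hP hPA
    have h := integral_invariance hμ hP (continuous_entry i j).aestronglyMeasurable
    simp only [hPA] at h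
    rw [integral_neg] at h
    linarith
  fin_cases i
  · exact key D2 D2_SO3 (fun A => by simp [D2, Matrix.mul_apply, Fin.sum_univ_three])
  · exact key D1 D1_SO3 (fun A => by simp [D1, Matrix.mul_apply, Fin.sum_univ_three])
  · exact key D1 D1_SO3 (fun A => by simp [D1, Matrix.mul_apply, Fin.sum_univ_three])

lemma M2_off (hμ : IsHaarSO3 μ) {i k : Fin 3} (j l : Fin 3) (hik : i ≠ k) :
    ∫ A, A i j * A k l ∂μ = 0 := by
  have key : ∀ P : Mat3, P ∈ SO3 →
      (∀ A : Mat3, (P * A) i j * (P * A) k l = -(A i j * A k l)) →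
      ∫ A, A i j * A k l ∂μ = 0 := by
    intro P hP hPA
    have h := integral_invariance hμ hP (g := fun A : Mat3 => A i j * A k l)
      ((continuous_entry i j).mul (continuous_entry k l)).aestronglyMeasurable
    simp only [hPA] at h
    rw [integral_neg] at h
    linarith
  fin_cases i <;> fin_cases k
  · exact absurd rfl hik
  · exact key D2 D2_SO3 (fun A => by
      simp [D2, Matrix.mul_apply, Fin.sum_univ_three])
  · exact key D1 D1_SO3 (fun A => by
      simp [D1, Matrix.mul_apply, Fin.sum_univ_three])
  · exact key D2 D2_SO3 (fun A => by
      simp [D2, Matrix.mul_apply, Fin.sum_univ_three])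
  · exact absurd rfl hik
  · exact key D2 D2_SO3 (fun A => by
      simp [D2, Matrix.mul_apply, Fin.sum_univ_three])
  · exact key D1 D1_SO3 (fun A => by
      simp [D1, Matrix.mul_apply, Fin.sum_univ_three])
  · exact key D2 D2_SO3 (fun A => by
      simp [D2, Matrix.mul_apply, Fin.sum_univ_three])
  · exact absurd rfl hik

lemma M2_diag (hμ : IsHaarSO3 μ) (i j l : Fin 3) :
    ∫ A, A i j * A i l ∂μ = (if j = l then 1 else 0)/3 := by
  haveI : IsProbabilityMeasure μ := hμ.1
  have e1 : ∫ A, (A : Mat3) 1 j * A 1 l ∂μ = ∫ A, (A : Mat3) 0 j * A 0 l ∂μ := by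
    have h := integral_invariance hμ Rc_SO3 (g := fun A : Mat3 => A 0 j * A 0 l)
      ((continuous_entry 0 j).mul (continuous_entry 0 l)).aestronglyMeasurable
    have hr : ∀ A : Mat3, (Rc * A) 0 j * (Rc * A) 0 l = A 1 j * A 1 l := fun A => by
      simp [Rc, Matrix.mul_apply, Fin.sum_univ_three]
    simpa only [hr] using h
  have e2 : ∫ A, (A : Mat3) 2 j * A 2 l ∂μ = ∫ A, (A : Mat3) 1 j * A 1 l ∂μ := by
    have h := integral_invariance hμ Rc_SO3 (g := fun A : Mat3 => A 1 j * A 1 l)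
      ((continuous_entry 1 j).mul (continuous_entry 1 l)).aestronglyMeasurable
    have hr : ∀ A : Mat3, (Rc * A) 1 j * (Rc * A) 1 l = A 2 j * A 2 l := fun A => by
      simp [Rc, Matrix.mul_apply, Fin.sum_univ_three]
    simpa only [hr] using h
  have hsum : ∫ A, (∑ k : Fin 3, (A : Mat3) k j * A k l) ∂μ = (if j = l then 1 else 0) := by
    have hae : ∀ᵐ A ∂μ, (∑ k : Fin 3, (A : Mat3) k j * A k l) = (if j = l then 1 else 0) := by
      refine (ae_SO3 hμ).mono fun A hA => ?_
      have h1 : (Aᵀ * A) j l = (1 : Mat3) j l := by rw [hA.1]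
      rw [Matrix.one_apply] at h1
      simpa [Matrix.mul_apply] using h1
    rw [integral_congr_ae hae]
    simp
  rw [integral_finset_sum _ (fun k _ => int_entry_mul hμ k j k l)] at hsum
  rw [Fin.sum_univ_three] at hsum
  rw [e2, e1] at hsum
  have h0 : ∫ A, (A : Mat3) 0 j * A 0 l ∂μ = (if j = l then 1 else 0)/3 := by linarith
  have h1 : ∫ A, (A : Mat3) 1 j * A 1 l ∂μ = (if j = l then 1 else 0)/3 := by rw [e1]; linarith
  have h2 : ∫ A, (A : Mat3) 2 j * A 2 l ∂μ = (if j = l then 1 else 0)/3 := by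
    rw [e2, e1]; linarith
  fin_cases i
  · exact h0
  · exact h1
  · exact h2

lemma M2 (hμ : IsHaarSO3 μ) (i j k l : Fin 3) :
    ∫ A, A i j * A k l ∂μ
      = (if i = k then 1 else 0) * (if j = l then 1 else 0) / 3 := by
  by_cases hik : i = k
  · subst hik
    rw [M2_diag hμ i j l]
    simp
  · rw [M2_off hμ j l hik]
    simp [hik]

lemma integrable_mdotH (hμ : IsHaarSO3 μ) (H : Mat3) :
    Integrable (fun A : Mat3 => mdot A H) μ := by
  refine integrable_of_cont_bound hμ ?_ (9/2 * ‖H‖) (fun A hA => ?_)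
  · have : Continuous fun A : Mat3 => mdotL A H :=
      (ContinuousLinearMap.apply ℝ ℝ H).continuous.comp mdotL.continuous
    exact this
  · rw [Real.norm_eq_abs]
    have h := abs_mdot_le A H
    nlinarith [norm_nonneg H, norm_nonneg A, abs_nonneg (mdot A H)]

lemma int_mdot_zero (hμ : IsHaarSO3 μ) (H : Mat3) : ∫ A, mdot A H ∂μ = 0 := by
  have hrw : (fun A : Mat3 => mdot A H)
      = fun A => ∑ i, ∑ j, (1/2 * H i j) * A i j := by
    funext A
    rw [mdot_eq_sum, Finset.mul_sum]
    refine Finset.sum_congr rfl fun i _ => ?_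
    rw [Finset.mul_sum]
    exact Finset.sum_congr rfl fun j _ => by ring
  rw [hrw]
  rw [integral_finset_sum _ (fun i _ => integrable_finset_sum _
    (fun j _ => (int_entry hμ i j).const_mul _))]
  have : ∀ i : Fin 3, ∫ A, (∑ j, (1/2 * H i j) * (A : Mat3) i j) ∂μ = 0 := by
    intro i
    rw [integral_finset_sum _ (fun j _ => (int_entry hμ i j).const_mul _)]
    refine Finset.sum_eq_zero fun j _ => ?_
    rw [integral_const_mul, M1 hμ i j, mul_zero]
  simp only [this, Finset.sum_const_zero]

lemma integrable_mdotH_sq (hμ : IsHaarSO3 μ) (H : Mat3) :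
    Integrable (fun A : Mat3 => (mdot A H)^2) μ := by
  refine integrable_of_cont_bound hμ ?_ ((9/2 * ‖H‖)^2) (fun A hA => ?_)
  · have h1 : Continuous fun A : Mat3 => mdotL A H :=
      (ContinuousLinearMap.apply ℝ ℝ H).continuous.comp mdotL.continuous
    exact h1.pow 2
  · rw [Real.norm_eq_abs, abs_pow, sq_abs]
    have h := abs_mdot_le A H
    have h2 : |mdot A H| ≤ 9/2 * ‖H‖ := by nlinarith [norm_nonneg H, norm_nonneg A]
    rw [← sq_abs]
    exact pow_le_pow_left₀ (abs_nonneg _) h2 2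

lemma int_mdot_sq (hμ : IsHaarSO3 μ) (H : Mat3) :
    ∫ A, (mdot A H)^2 ∂μ = (∑ i, ∑ j, (H i j)^2)/12 := by
  have hrw : (fun A : Mat3 => (mdot A H)^2)
      = fun A => ∑ i, ∑ k, ∑ j, ∑ l,
          (1/4 * H i j * H k l) * (A i j * A k l) := by
    funext A
    rw [mdot_eq_sum]
    have e1 : (1/2 * ∑ i, ∑ j, A i j * H i j)^2
        = 1/4 * ((∑ i, ∑ j, A i j * H i j) * (∑ k, ∑ l, A k l * H k l)) := by ring
    rw [e1, Finset.sum_mul_sum, Finset.mul_sum]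
    refine Finset.sum_congr rfl fun i _ => ?_
    rw [Finset.mul_sum]
    refine Finset.sum_congr rfl fun k _ => ?_
    rw [Finset.sum_mul_sum, Finset.mul_sum]
    refine Finset.sum_congr rfl fun j _ => ?_
    rw [Finset.mul_sum]
    exact Finset.sum_congr rfl fun l _ => by ring
  rw [hrw]
  have int4 : ∀ i k j l : Fin 3,
      Integrable (fun A : Mat3 => (1/4 * H i j * H k l) * (A i j * A k l)) μ :=
    fun i k j l => (int_entry_mul hμ i j k l).const_mul _
  rw [integral_finset_sum _ (fun i _ => integrable_finset_sum _ (fun k _ =>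
    integrable_finset_sum _ (fun j _ => integrable_finset_sum _ (fun l _ => int4 i k j l))))]
  have step : ∀ i : Fin 3, (∫ A, (∑ k, ∑ j, ∑ l,
      (1/4 * H i j * H k l) * ((A : Mat3) i j * A k l)) ∂μ) = ∑ j, 1/4 * (H i j)^2 / 3 := by
    intro i
    rw [integral_finset_sum _ (fun k _ => integrable_finset_sum _ (fun j _ =>
      integrable_finset_sum _ (fun l _ => int4 i k j l)))]
    have stepk : ∀ k : Fin 3, (∫ A, (∑ j, ∑ l,
        (1/4 * H i j * H k l) * ((A : Mat3) i j * A k l)) ∂μ)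
        = ∑ j, ∑ l, (1/4 * H i j * H k l) *
            ((if i = k then 1 else 0) * (if j = l then 1 else 0) / 3) := by
      intro k
      rw [integral_finset_sum _ (fun j _ => integrable_finset_sum _ (fun l _ => int4 i k j l))]
      refine Finset.sum_congr rfl fun j _ => ?_
      rw [integral_finset_sum _ (fun l _ => int4 i k j l)]
      refine Finset.sum_congr rfl fun l _ => ?_
      rw [integral_const_mul, M2 hμ i j k l]
    simp only [stepk]
    fin_cases i <;>
      · simp [Fin.sum_univ_three]
        ring
  simp only [step]
  rw [Finset.sum_div]
  refine Finset.sum_congr rfl fun i _ => ?_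
  rw [Finset.sum_div]
  exact Finset.sum_congr rfl fun j _ => by ring

lemma mdot_sub_left (A C H : Mat3) : mdot (A - C) H = mdot A H - mdot C H := by
  simp [mdot_eq_sum, Matrix.sub_apply, sub_mul, Finset.sum_sub_distrib, mul_sub]

lemma vM_eq (J A : Mat3) : vonMises μ J A = (Z μ J)⁻¹ * Real.exp (mdot J A) := by
  rw [vonMises, div_eq_inv_mul]

lemma continuous_vM (J : Mat3) : Continuous (vonMises μ J) := by
  unfold vonMises
  exact (continuous_exp_mdot J).div_const _

lemma vM_bound (hμ : IsHaarSO3 μ) (J : Mat3) {A : Mat3} (hA : ‖A‖ ≤ 1) :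
    vonMises μ J A ≤ (Z μ J)⁻¹ * Real.exp (9/2 * ‖J‖) := by
  rw [vM_eq]
  exact mul_le_mul_of_nonneg_left (exp_mdot_le hA ‖J‖ le_rfl)
    (inv_nonneg.2 (Z_pos hμ J).le)

lemma vM_pos (hμ : IsHaarSO3 μ) (J A : Mat3) : 0 < vonMises μ J A :=
  div_pos (Real.exp_pos _) (Z_pos hμ J)

lemma vM_lower (hμ : IsHaarSO3 μ) (J : Mat3) {A : Mat3} (hA : ‖A‖ ≤ 1) :
    Real.exp (-(9/2 * ‖J‖)) * (Z μ J)⁻¹ ≤ vonMises μ J A := by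
  rw [vM_eq, mul_comm]
  refine mul_le_mul_of_nonneg_left ?_ (inv_nonneg.2 (Z_pos hμ J).le)
  refine Real.exp_le_exp.2 ?_
  have h := abs_mdot_le J A
  have := abs_le.1 h
  nlinarith [norm_nonneg J, norm_nonneg A]

lemma integrable_vM (hμ : IsHaarSO3 μ) (J : Mat3) : Integrable (vonMises μ J) μ := by
  refine integrable_of_cont_bound hμ (continuous_vM J) ((Z μ J)⁻¹ * Real.exp (9/2 * ‖J‖))
    (fun A hA => ?_)
  rw [Real.norm_eq_abs, abs_of_pos (vM_pos hμ J A)]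
  exact vM_bound hμ J hA

lemma mdotAH_bound (H : Mat3) {A : Mat3} (hA : ‖A‖ ≤ 1) : |mdot A H| ≤ 9/2 * ‖H‖ := by
  have h := abs_mdot_le A H
  nlinarith [norm_nonneg H, norm_nonneg A]

lemma continuous_mdotAH (H : Mat3) : Continuous fun A : Mat3 => mdot A H :=
  (ContinuousLinearMap.apply ℝ ℝ H).continuous.comp mdotL.continuous

lemma integrable_mdot_vM (hμ : IsHaarSO3 μ) (J H : Mat3) :
    Integrable (fun A => mdot A H * vonMises μ J A) μ := by
  refine integrable_of_cont_bound hμ ((continuous_mdotAH H).mul (continuous_vM J))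
    ((9/2 * ‖H‖) * ((Z μ J)⁻¹ * Real.exp (9/2 * ‖J‖))) (fun A hA => ?_)
  rw [Real.norm_eq_abs, abs_mul, abs_of_pos (vM_pos hμ J A)]
  exact mul_le_mul (mdotAH_bound H hA) (vM_bound hμ J hA) (vM_pos hμ J A).le
    (by positivity)

lemma integrable_mdot_sq_vM (hμ : IsHaarSO3 μ) (J H : Mat3) (m : ℝ) :
    Integrable (fun A => (mdot A H - m)^2 * vonMises μ J A) μ := by
  refine integrable_of_cont_bound hμ
    ((((continuous_mdotAH H).sub continuous_const).pow 2).mul (continuous_vM J))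
    ((9/2 * ‖H‖ + |m|)^2 * ((Z μ J)⁻¹ * Real.exp (9/2 * ‖J‖))) (fun A hA => ?_)
  rw [Real.norm_eq_abs, abs_mul, abs_of_pos (vM_pos hμ J A), abs_pow, sq_abs]
  refine mul_le_mul ?_ (vM_bound hμ J hA) (vM_pos hμ J A).le (by positivity)
  have h1 := mdotAH_bound H hA
  have h2 : |mdot A H - m| ≤ 9/2 * ‖H‖ + |m| := by
    have := abs_sub_abs_le_abs_sub (mdot A H) m
    have h3 := abs_sub (mdot A H) m
    calc |mdot A H - m| ≤ |mdot A H| + |m| := abs_sub _ m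
    _ ≤ 9/2 * ‖H‖ + |m| := by linarith
  rw [← sq_abs]
  exact pow_le_pow_left₀ (abs_nonneg _) h2 2

lemma integrable_sq_only (hμ : IsHaarSO3 μ) (H : Mat3) (m : ℝ) :
    Integrable (fun A : Mat3 => (mdot A H - m)^2) μ := by
  refine integrable_of_cont_bound hμ
    (((continuous_mdotAH H).sub continuous_const).pow 2)
    ((9/2 * ‖H‖ + |m|)^2) (fun A hA => ?_)
  rw [Real.norm_eq_abs, abs_pow, sq_abs]
  have h1 := mdotAH_bound H hA
  have h2 : |mdot A H - m| ≤ 9/2 * ‖H‖ + |m| := by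
    calc |mdot A H - m| ≤ |mdot A H| + |m| := abs_sub _ m
    _ ≤ 9/2 * ‖H‖ + |m| := by linarith
  rw [← sq_abs]
  exact pow_le_pow_left₀ (abs_nonneg _) h2 2

lemma int_vM_one (hμ : IsHaarSO3 μ) (J : Mat3) : ∫ A, vonMises μ J A ∂μ = 1 := by
  simp only [vonMises]
  rw [integral_div]
  exact div_self (Z_ne hμ J)

lemma int_mdot_vM (hμ : IsHaarSO3 μ) (J H : Mat3) :
    ∫ A, mdot A H * vonMises μ J A ∂μ = (Z μ J)⁻¹ * L1 μ J H := by
  have hrw : (fun A => mdot A H * vonMises μ J A)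
      = fun A => (Z μ J)⁻¹ * (Real.exp (mdot J A) * mdot A H) := by
    funext A; rw [vM_eq]; ring
  rw [hrw, integral_const_mul, L1_apply hμ J H]

lemma int_mdot_sq_vM (hμ : IsHaarSO3 μ) (J H : Mat3) :
    ∫ A, (mdot A H)^2 * vonMises μ J A ∂μ = (Z μ J)⁻¹ * L2 μ J H H := by
  have hrw : (fun A => (mdot A H)^2 * vonMises μ J A)
      = fun A => (Z μ J)⁻¹ * (Real.exp (mdot J A) * (mdot A H * mdot A H)) := by
    funext A; rw [vM_eq]; ring
  rw [hrw, integral_const_mul, L2_apply hμ J H H]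

lemma integrable_vM_entry (hμ : IsHaarSO3 μ) (J : Mat3) (i j : Fin 3) :
    Integrable (fun A : Mat3 => vonMises μ J A * A i j) μ := by
  refine integrable_of_cont_bound hμ ((continuous_vM J).mul (continuous_entry i j))
    ((Z μ J)⁻¹ * Real.exp (9/2 * ‖J‖) * 1) (fun A hA => ?_)
  rw [Real.norm_eq_abs, abs_mul, abs_of_pos (vM_pos hμ J A)]
  exact mul_le_mul (vM_bound hμ J hA) (le_trans (entry_le_norm A i j) hA)
    (abs_nonneg _) (mul_nonneg (inv_nonneg.2 (Z_pos hμ J).le) (Real.exp_pos _).le)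

lemma mdot_Jcal (hμ : IsHaarSO3 μ) (J H : Mat3) :
    mdot (Jcal μ (vonMises μ J)) H = (Z μ J)⁻¹ * L1 μ J H := by
  have h1 : mdot (Jcal μ (vonMises μ J)) H
      = ∑ i, ∑ j, ∫ A, (1/2 * H i j) * (vonMises μ J A * A i j) ∂μ := by
    rw [mdot_eq_sum, Finset.mul_sum]
    refine Finset.sum_congr rfl fun i _ => ?_
    rw [Finset.mul_sum]
    refine Finset.sum_congr rfl fun j _ => ?_
    rw [integral_const_mul]
    show 1/2 * ((∫ A, vonMises μ J A * A i j ∂μ) * H i j) = _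
    ring
  rw [h1]
  have h2 : ∀ i : Fin 3, ∑ j : Fin 3, (∫ A, (1/2 * H i j) * (vonMises μ J A * A i j) ∂μ)
      = ∫ A, (∑ j : Fin 3, (1/2 * H i j) * (vonMises μ J A * A i j)) ∂μ := fun i =>
    (integral_finset_sum _ (fun j _ => (integrable_vM_entry hμ J i j).const_mul _)).symm
  simp only [h2]
  rw [← integral_finset_sum _ (fun i _ => integrable_finset_sum _
    (fun j _ => (integrable_vM_entry hμ J i j).const_mul _))]
  have h3 : (fun A => ∑ i : Fin 3, ∑ j : Fin 3, (1/2 * H i j) * (vonMises μ J A * A i j))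
      = fun A => mdot A H * vonMises μ J A := by
    funext A
    rw [mdot_eq_sum]
    rw [show (1/2 * ∑ i, ∑ j, A i j * H i j) * vonMises μ J A
        = (1/2 * vonMises μ J A) * ∑ i, ∑ j, A i j * H i j from by ring]
    rw [Finset.mul_sum]
    refine Finset.sum_congr rfl fun i _ => ?_
    rw [Finset.mul_sum]
    exact Finset.sum_congr rfl fun j _ => by ring
  rw [h3, int_mdot_vM hμ J H]

lemma var_identity (hμ : IsHaarSO3 μ) (J H : Mat3) :
    ∫ A, (mdot (A - Jcal μ (vonMises μ J)) H)^2 * vonMises μ J A ∂μ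
      = (Z μ J)⁻¹ * L2 μ J H H - ((Z μ J)⁻¹ * L1 μ J H)^2 := by
  set m := (Z μ J)⁻¹ * L1 μ J H with hm
  have hC : mdot (Jcal μ (vonMises μ J)) H = m := mdot_Jcal hμ J H
  have hrw : (fun A => (mdot (A - Jcal μ (vonMises μ J)) H)^2 * vonMises μ J A)
      = fun A => ((mdot A H)^2 * vonMises μ J A - (2*m) * (mdot A H * vonMises μ J A))
          + m^2 * vonMises μ J A := by
    funext A; rw [mdot_sub_left, hC]; ring
  rw [hrw]
  have i2 : Integrable (fun A => (mdot A H)^2 * vonMises μ J A) μ := by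
    have := integrable_mdot_sq_vM hμ J H 0
    simpa using this
  have i1 := (integrable_mdot_vM hμ J H).const_mul (2*m)
  have i0 : Integrable (fun A => m^2 * vonMises μ J A) μ := (integrable_vM hμ J).const_mul (m^2)
  have i21 : Integrable (fun A => mdot A H ^ 2 * vonMises μ J A
      - 2 * m * (mdot A H * vonMises μ J A)) μ := i2.sub i1
  rw [integral_add i21 i0, integral_sub i2 i1, integral_const_mul,
    integral_const_mul, int_mdot_sq_vM hμ J H, int_mdot_vM hμ J H, int_vM_one hμ J]
  ring

lemma var_pos (hμ : IsHaarSO3 μ) (J H : Mat3) (hH : H ≠ 0) :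
    0 < ∫ A, (mdot (A - Jcal μ (vonMises μ J)) H)^2 * vonMises μ J A ∂μ := by
  haveI : IsProbabilityMeasure μ := hμ.1
  set m := mdot (Jcal μ (vonMises μ J)) H with hm
  have hrw : (fun A => (mdot (A - Jcal μ (vonMises μ J)) H)^2 * vonMises μ J A)
      = fun A => (mdot A H - m)^2 * vonMises μ J A := by
    funext A; rw [mdot_sub_left]
  rw [hrw]
  set δ := Real.exp (-(9/2 * ‖J‖)) * (Z μ J)⁻¹ with hδ
  have hδpos : 0 < δ := mul_pos (Real.exp_pos _) (inv_pos.2 (Z_pos hμ J))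
  have hmono : δ * ∫ A, (mdot A H - m)^2 ∂μ
      ≤ ∫ A, (mdot A H - m)^2 * vonMises μ J A ∂μ := by
    rw [← integral_const_mul]
    refine integral_mono_ae ((integrable_sq_only hμ H m).const_mul δ)
      (integrable_mdot_sq_vM hμ J H m) ?_
    refine (ae_norm_le_one hμ).mono fun A hA => ?_
    have h1 := vM_lower hμ J hA
    have h2 : (0:ℝ) ≤ (mdot A H - m)^2 := sq_nonneg _
    calc δ * (mdot A H - m)^2 = (mdot A H - m)^2 * δ := by ring
    _ ≤ (mdot A H - m)^2 * vonMises μ J A := mul_le_mul_of_nonneg_left h1 h2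
  have hint : ∫ A, (mdot A H - m)^2 ∂μ = (∑ i, ∑ j, (H i j)^2)/12 + m^2 := by
    have hrw2 : (fun A : Mat3 => (mdot A H - m)^2)
        = fun A => ((mdot A H)^2 - (2*m) * mdot A H) + m^2 := by funext A; ring
    rw [hrw2]
    have i2 := integrable_mdotH_sq hμ H
    have i1 := (integrable_mdotH hμ H).const_mul (2*m)
    have i21 : Integrable (fun A : Mat3 => mdot A H ^ 2 - 2 * m * mdot A H) μ := i2.sub i1
    rw [integral_add i21 (integrable_const _), integral_sub i2 i1,
      integral_const_mul, int_mdot_zero hμ H, int_mdot_sq hμ H, integral_const]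
    simp
  have hpos : 0 < (∑ i, ∑ j, (H i j)^2)/12 + m^2 := by
    have hne : ∃ i j, H i j ≠ 0 := by
      by_contra hcon
      push_neg at hcon
      exact hH (by ext i j; simpa using hcon i j)
    obtain ⟨i0, j0, hij⟩ := hne
    have h1 : (0:ℝ) < (H i0 j0)^2 := by positivity
    have h2 : (H i0 j0)^2 ≤ ∑ i, ∑ j, (H i j)^2 := by
      have ha : (H i0 j0)^2 ≤ ∑ j, (H i0 j)^2 :=
        Finset.single_le_sum (f := fun j => H i0 j ^ 2) (fun j _ => sq_nonneg _)
          (Finset.mem_univ j0)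
      have hb : ∑ j, (H i0 j)^2 ≤ ∑ i, ∑ j, (H i j)^2 :=
        Finset.single_le_sum (f := fun i => ∑ j, (H i j)^2)
          (fun i _ => Finset.sum_nonneg fun j _ => sq_nonneg _) (Finset.mem_univ i0)
      exact le_trans ha hb
    nlinarith [sq_nonneg m]
  calc (0:ℝ) < δ * ((∑ i, ∑ j, (H i j)^2)/12 + m^2) := mul_pos hδpos hpos
  _ = δ * ∫ A, (mdot A H - m)^2 ∂μ := by rw [hint]
  _ ≤ _ := hmono

lemma second_deriv_eq (hμ : IsHaarSO3 μ) (ρ : ℝ) (J H : Mat3) :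
    fderiv ℝ (fderiv ℝ (V μ ρ)) J H H =
      mdot H H - ρ * ∫ A, (mdot (A - Jcal μ (vonMises μ J)) H) ^ 2 * vonMises μ J A ∂μ := by
  rw [fderiv_fderiv_V hμ ρ J, DDV_apply, var_identity hμ J H]
  have hz := Z_ne hμ J
  congr 1
  congr 1
  congr 1
  field_simp

end Haar

/-- `V` is twice differentiable, with
`D²V(J)(H,H) = ∥H∥² − ρ ∫ ((A − 𝒥[M_J])·H)² M_J(A) dμ(A)`; consequently
`D²V(J)(H,H) < ∥H∥²` for every `H ≠ 0` (all eigenvalues of the Hessian are `< 1`). -/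
theorem V_hessian (μ : Measure Mat3) (hμ : IsHaarSO3 μ) (ρ : ℝ) (hρ : 0 < ρ) :
    Differentiable ℝ (V μ ρ) ∧ Differentiable ℝ (fderiv ℝ (V μ ρ)) ∧
    (∀ J H : Mat3,
      fderiv ℝ (fderiv ℝ (V μ ρ)) J H H =
        mdot H H - ρ * ∫ A, (mdot (A - Jcal μ (vonMises μ J)) H) ^ 2 * vonMises μ J A ∂μ) ∧
    (∀ J H : Mat3, H ≠ 0 → fderiv ℝ (fderiv ℝ (V μ ρ)) J H H < mdot H H) := by
  refine ⟨fun J => (hasFDerivAt_V hμ ρ J).differentiableAt, ?_, ?_, ?_⟩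
  · rw [fderiv_V hμ ρ]
    exact fun J => (hasFDerivAt_DV hμ ρ J).differentiableAt
  · exact fun J H => second_deriv_eq hμ ρ J H
  · intro J H hH
    rw [second_deriv_eq hμ ρ J H]
    have h := var_pos hμ J H hH
    nlinarith
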